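/- arXiv:1304.6765 — 10 statements merged into one kernel-verified Lean document; each statement's English description precedes it below -/
import Mathlib

section
/- For R, R_d ∈ SO(3), define the attitude error vector e_R ∈ ℝ³ by ê_R = (1/2)(R_dᵀR − RᵀR_d), where ˆ· is the isomorphism between ℝ³ and 3×3 skew-symmetric matrices. Then (1/2)‖e_R‖² ≤ Ψ(R,R_d), where Ψ(R,R_d) = (1/2)·tr(I − R_dᵀR). -/
open Matrix
noncomputable section

/-- `SO3 R` : `R` is a rotation matrix. -/
def SO3 (R : Matrix (Fin 3) (Fin 3) ℝ) : Prop := Rᵀ * R = 1 ∧ R.det = 1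

/-- Attitude error function `Ψ(R,R_d) = ½ tr(I − R_dᵀ R)`. -/
def Psi (R Rd : Matrix (Fin 3) (Fin 3) ℝ) : ℝ := (1/2) * (1 - Rdᵀ * R).trace

/-- The hat map identifying `ℝ³` with skew-symmetric matrices. -/
def hat (x : Fin 3 → ℝ) : Matrix (Fin 3) (Fin 3) ℝ :=
  !![0, -x 2, x 1; x 2, 0, -x 0; -x 1, x 0, 0]

/-- The vee map, inverse of the hat map on skew-symmetric matrices. -/
def vee (A : Matrix (Fin 3) (Fin 3) ℝ) : Fin 3 → ℝ := ![A 2 1, A 0 2, A 1 0]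

/-- Attitude error vector `e_R = (½ (R_dᵀ R − Rᵀ R_d))ᵛ`. -/
def eR (R Rd : Matrix (Fin 3) (Fin 3) ℝ) : Fin 3 → ℝ :=
  vee ((1/2 : ℝ) • (Rdᵀ * R - Rᵀ * Rd))

/-- Euclidean dot product on `ℝ³`. -/
def dot (x y : Fin 3 → ℝ) : ℝ := ∑ i, x i * y i

/-- Euclidean norm on `ℝ³`. -/
def enorm3 (x : Fin 3 → ℝ) : ℝ := Real.sqrt (dot x x)

/-- Cross product on `ℝ³`. -/
def cross (x y : Fin 3 → ℝ) : Fin 3 → ℝ :=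
  ![x 1 * y 2 - x 2 * y 1, x 2 * y 0 - x 0 * y 2, x 0 * y 1 - x 1 * y 0]

lemma aux_ineq (Q : Matrix (Fin 3) (Fin 3) ℝ) (h1 : Qᵀ * Q = 1) (h2 : Q.det = 1) :
    (1/2) * ((1/2*(Q 2 1 - Q 1 2))^2 + (1/2*(Q 0 2 - Q 2 0))^2 + (1/2*(Q 1 0 - Q 0 1))^2)
      ≤ (1/2) * (3 - (Q 0 0 + Q 1 1 + Q 2 2)) := by
  have hadj : Q.adjugate = Qᵀ := by
    have hinv : Q⁻¹ = Qᵀ := Matrix.inv_eq_left_inv h1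
    have := Matrix.inv_def Q
    rw [h2] at this
    simpa [hinv.symm] using this.symm
  rw [Matrix.adjugate_fin_three] at hadj
  have a00 := congrFun (congrFun hadj 0) 0
  have a11 := congrFun (congrFun hadj 1) 1
  have a22 := congrFun (congrFun hadj 2) 2
  simp [Matrix.transpose_apply] at a00 a11 a22
  have c0 := congrFun (congrFun h1 0) 0
  have c1 := congrFun (congrFun h1 1) 1
  have c2 := congrFun (congrFun h1 2) 2
  simp [Matrix.mul_apply, Fin.sum_univ_three, Matrix.transpose_apply, Matrix.one_apply] at c0 c1 c2
  nlinarith [sq_nonneg (Q 0 0 + Q 1 1 + Q 2 2 - 3), c0, c1, c2, a00, a11, a22]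

theorem eR_sq_le_psi (R Rd : Matrix (Fin 3) (Fin 3) ℝ)
    (hR : SO3 R) (hRd : SO3 Rd) :
    (1/2) * enorm3 (eR R Rd) ^ 2 ≤ Psi R Rd := by
  obtain ⟨hR1, hR2⟩ := hR
  obtain ⟨hRd1, hRd2⟩ := hRd
  set Q := Rdᵀ * R with hQ
  have hQ1 : Qᵀ * Q = 1 := by
    have h' : Rd * Rdᵀ = 1 := mul_eq_one_comm.mp hRd1
    calc Qᵀ * Q = Rᵀ * (Rd * Rdᵀ) * R := by
          simp [hQ, Matrix.transpose_mul, Matrix.mul_assoc]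
      _ = 1 := by rw [h']; simpa [Matrix.mul_assoc] using hR1
  have hQ2 : Q.det = 1 := by
    simp [hQ, Matrix.det_mul, Matrix.det_transpose, hR2, hRd2]
  have hRtRd : Rᵀ * Rd = Qᵀ := by simp [hQ, Matrix.transpose_mul]
  have key := aux_ineq Q hQ1 hQ2
  have henorm : enorm3 (eR R Rd) ^ 2 =
      (1/2*(Q 2 1 - Q 1 2))^2 + (1/2*(Q 0 2 - Q 2 0))^2 + (1/2*(Q 1 0 - Q 0 1))^2 := by
    have hd : dot (eR R Rd) (eR R Rd) =
        (1/2*(Q 2 1 - Q 1 2))^2 + (1/2*(Q 0 2 - Q 2 0))^2 + (1/2*(Q 1 0 - Q 0 1))^2 := by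
      simp [dot, eR, vee, hRtRd, Fin.sum_univ_three, Matrix.sub_apply, Matrix.transpose_apply]
      ring
    rw [enorm3, Real.sq_sqrt, hd]
    rw [hd]; positivity
  rw [henorm]
  have htr : Psi R Rd = (1/2) * (3 - (Q 0 0 + Q 1 1 + Q 2 2)) := by
    simp [Psi, Matrix.trace, Matrix.diag, Fin.sum_univ_three, Matrix.sub_apply, Matrix.one_apply]
    rfl
  rw [htr]
  exact key
end
end

section
/- Let ψ be a constant with 0 < ψ < 2 and suppose R, R_d ∈ SO(3) satisfy Ψ(R,R_d) < ψ. Then Ψ(R,R_d) ≤ (1/(2−ψ))‖e_R‖², where e_R = ((1/2)(R_dᵀR − RᵀR_d))ᵛ. -/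
open Matrix
noncomputable section

/-- Euclidean norm on `ℝ³`. -/
def enorm (x : Fin 3 → ℝ) : ℝ := Real.sqrt (dot x x)

lemma newton3 (A : Matrix (Fin 3) (Fin 3) ℝ) :
    (A * A).trace + 2 * (Matrix.adjugate A).trace = A.trace ^ 2 := by
  simp [Matrix.adjugate_fin_three, Matrix.trace_fin_three, Matrix.mul_apply,
    Fin.sum_univ_three]
  ring

lemma dot_eR_eq (R Rd : Matrix (Fin 3) (Fin 3) ℝ) :
    dot (eR R Rd) (eR R Rd) =
      (((Rdᵀ * R)ᵀ * (Rdᵀ * R)).trace - ((Rdᵀ * R) * (Rdᵀ * R)).trace) / 4 := by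
  simp [dot, eR, vee, Matrix.trace_fin_three, Matrix.mul_apply, Fin.sum_univ_three,
    Matrix.transpose_apply]
  ring

theorem psi_le_eR_sq (R Rd : Matrix (Fin 3) (Fin 3) ℝ) (ψ : ℝ)
    (hR : SO3 R) (hRd : SO3 Rd) (hψ0 : 0 < ψ) (hψ2 : ψ < 2)
    (hPsi : Psi R Rd < ψ) :
    Psi R Rd ≤ (1 / (2 - ψ)) * _root_.enorm (eR R Rd) ^ 2 := by
  obtain ⟨hR1, hR2⟩ := hR
  obtain ⟨hRd1, hRd2⟩ := hRd
  have hRd1' : Rd * Rdᵀ = 1 := mul_eq_one_comm.mp hRd1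
  set Q : Matrix (Fin 3) (Fin 3) ℝ := Rdᵀ * R with hQ
  have hQ1 : Qᵀ * Q = 1 := by
    calc Qᵀ * Q = Rᵀ * (Rd * Rdᵀ) * R := by
          rw [hQ, Matrix.transpose_mul, Matrix.transpose_transpose]
          noncomm_ring
      _ = 1 := by rw [hRd1', Matrix.mul_one, hR1]
  have hQdet : Q.det = 1 := by
    rw [hQ, Matrix.det_mul, Matrix.det_transpose, hR2, hRd2, mul_one]
  have hadj : Matrix.adjugate Q = Qᵀ := by
    calc Matrix.adjugate Q = (Qᵀ * Q) * Matrix.adjugate Q := by rw [hQ1, Matrix.one_mul]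
      _ = Qᵀ * (Q * Matrix.adjugate Q) := by rw [Matrix.mul_assoc]
      _ = Qᵀ := by rw [Matrix.mul_adjugate, hQdet, one_smul, Matrix.mul_one]
  have hN := newton3 Q
  rw [hadj, Matrix.trace_transpose] at hN
  have hdot : dot (eR R Rd) (eR R Rd) = Psi R Rd * (2 - Psi R Rd) := by
    have h1 := dot_eR_eq R Rd
    rw [← hQ] at h1
    rw [hQ1] at h1
    have hP : Psi R Rd = (3 - Q.trace) / 2 := by
      simp [Psi, hQ, Matrix.trace_sub, Matrix.trace_one]
      ring
    rw [h1, hP, Matrix.trace_one]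
    simp only [Fintype.card_fin]
    nlinarith [hN]
  have hdot0 : 0 ≤ dot (eR R Rd) (eR R Rd) := by
    exact Finset.sum_nonneg fun i _ => mul_self_nonneg _
  have hP0 : 0 ≤ Psi R Rd := by nlinarith
  have hen : _root_.enorm (eR R Rd) ^ 2 = dot (eR R Rd) (eR R Rd) := by
    rw [_root_.enorm, Real.sq_sqrt hdot0]
  rw [hen, hdot, div_mul_eq_mul_div, one_mul, le_div_iff₀ (by linarith)]
  nlinarith [mul_nonneg hP0 (show (0:ℝ) ≤ ψ - Psi R Rd by linarith)]
end
end

section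
/- For R, R_d ∈ SO(3), the squared norm of the attitude error vector satisfies ‖e_R‖² = Ψ(R,R_d)(2 − Ψ(R,R_d)), where e_R = ((1/2)(R_dᵀR − RᵀR_d))ᵛ and Ψ(R,R_d) = (1/2)·tr(I − R_dᵀR). -/
open Matrix
noncomputable section

theorem eR_sq_eq (R Rd : Matrix (Fin 3) (Fin 3) ℝ)
    (hR : SO3 R) (hRd : SO3 Rd) :
    _root_.enorm (eR R Rd) ^ 2 = Psi R Rd * (2 - Psi R Rd) := by
  obtain ⟨hR1, hR2⟩ := hR
  obtain ⟨hRd1, hRd2⟩ := hRd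
  set Q := Rdᵀ * R with hQdef
  have hRd1' : Rd * Rdᵀ = 1 := mul_eq_one_comm.mp hRd1
  have hQ1 : Qᵀ * Q = 1 := by
    show (Rdᵀ * R)ᵀ * (Rdᵀ * R) = 1
    rw [Matrix.transpose_mul, Matrix.transpose_transpose, Matrix.mul_assoc,
      ← Matrix.mul_assoc Rd, hRd1', Matrix.one_mul, hR1]
  have hQ1' : Q * Qᵀ = 1 := mul_eq_one_comm.mp hQ1
  have hdet : Q.det = 1 := by
    rw [hQdef, Matrix.det_mul, Matrix.det_transpose, hR2, hRd2, mul_one]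
  have hadj : Q.adjugate = Qᵀ := by
    calc Q.adjugate = 1 * Q.adjugate := (Matrix.one_mul _).symm
    _ = Qᵀ * (Q * Q.adjugate) := by rw [← hQ1, Matrix.mul_assoc]
    _ = Qᵀ := by rw [Matrix.mul_adjugate, hdet, one_smul, Matrix.mul_one]
  -- entry-level facts
  have hc0 : Q 1 1 * Q 2 2 - Q 1 2 * Q 2 1 = Q 0 0 := by
    have := congrFun (congrFun (hadj.symm.trans (Matrix.adjugate_fin_three Q)) 0) 0
    simpa [Matrix.transpose_apply] using this.symm
  have hc1 : Q 0 0 * Q 2 2 - Q 0 2 * Q 2 0 = Q 1 1 := by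
    have := congrFun (congrFun (hadj.symm.trans (Matrix.adjugate_fin_three Q)) 1) 1
    simpa [Matrix.transpose_apply] using this.symm
  have hc2 : Q 0 0 * Q 1 1 - Q 0 1 * Q 1 0 = Q 2 2 := by
    have := congrFun (congrFun (hadj.symm.trans (Matrix.adjugate_fin_three Q)) 2) 2
    simpa [Matrix.transpose_apply] using this.symm
  have hrow : ∀ k : Fin 3, Q k 0 ^ 2 + Q k 1 ^ 2 + Q k 2 ^ 2 = 1 := by
    intro k
    have := congrFun (congrFun hQ1' k) k
    simp [Matrix.mul_apply, Fin.sum_univ_three, Matrix.one_apply, Matrix.transpose_apply] at this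
    nlinarith [this]
  have h0 := hrow 0
  have h1 := hrow 1
  have h2 := hrow 2
  -- compute both sides in terms of entries of Q
  have heR : ∀ i, eR R Rd i = vee ((1/2 : ℝ) • (Q - Qᵀ)) i := by
    intro i
    have hQt : Rᵀ * Rd = Qᵀ := by
      rw [hQdef, Matrix.transpose_mul, Matrix.transpose_transpose]
    rw [eR, hQt, ← hQdef]
  have hdot : dot (eR R Rd) (eR R Rd) =
      ((Q 2 1 - Q 1 2) / 2) ^ 2 + ((Q 0 2 - Q 2 0) / 2) ^ 2 + ((Q 1 0 - Q 0 1) / 2) ^ 2 := by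
    rw [dot, Fin.sum_univ_three, heR 0, heR 1, heR 2]
    simp [vee, Matrix.smul_apply, Matrix.sub_apply, Matrix.transpose_apply]
    ring
  have hPsi : Psi R Rd = (1/2) * (3 - (Q 0 0 + Q 1 1 + Q 2 2)) := by
    rw [Psi, ← hQdef, Matrix.trace_sub, Matrix.trace_one, Matrix.trace]
    simp only [Fin.sum_univ_three, Matrix.diag, Fintype.card_fin]
    norm_num
  have hnn : 0 ≤ dot (eR R Rd) (eR R Rd) := by rw [hdot]; positivity
  rw [_root_.enorm, Real.sq_sqrt hnn, hdot, hPsi]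
  linear_combination (h0 + h1 + h2) / 4 + (hc0 + hc1 + hc2) / 2
end
end

section
/- Let R(t) and R_d(t) be smooth curves in SO(3) satisfying Ṙ = RΩ̂ and Ṙ_d = R_dΩ̂_d for curves Ω, Ω_d : ℝ → ℝ³. Define Ψ(t) = (1/2)·tr(I − R_d(t)ᵀR(t)), e_R(t) = ((1/2)(R_dᵀR − RᵀR_d))ᵛ, and e_Ω(t) = Ω − RᵀR_dΩ_d. Then dΨ/dt = e_R · e_Ω. -/
open Matrix
noncomputable section

/-- A rotation fixes its axis: `Q (Q − Qᵀ)ᵛ = (Q − Qᵀ)ᵛ`. -/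
lemma rot_fix {Q : Matrix (Fin 3) (Fin 3) ℝ} (h : SO3 Q) :
    Q.mulVec (vee (Q - Qᵀ)) = vee (Q - Qᵀ) := by
  obtain ⟨h1, h2⟩ := h
  have hadj : Q.adjugate = Qᵀ := by
    have hinv : Q⁻¹ = Qᵀ := Matrix.inv_eq_left_inv h1
    rw [Matrix.inv_def, h2] at hinv
    simpa using hinv
  rw [Matrix.adjugate_fin_three] at hadj
  have r12 : -(Q 0 0 * Q 1 2) + Q 0 2 * Q 1 0 = Q 2 1 := by
    have := congrFun (congrFun hadj 1) 2; simpa using this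
  have r21 : -(Q 0 0 * Q 2 1) + Q 0 1 * Q 2 0 = Q 1 2 := by
    have := congrFun (congrFun hadj 2) 1; simpa using this
  have r02 : Q 1 0 * Q 2 1 - Q 1 1 * Q 2 0 = Q 0 2 := by
    have := congrFun (congrFun hadj 2) 0; simpa using this
  have r20 : Q 0 1 * Q 1 2 - Q 0 2 * Q 1 1 = Q 2 0 := by
    have := congrFun (congrFun hadj 0) 2; simpa using this
  have r10 : -(Q 0 1 * Q 2 2) + Q 0 2 * Q 2 1 = Q 1 0 := by
    have := congrFun (congrFun hadj 0) 1; simpa using this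
  have r01 : -(Q 1 0 * Q 2 2) + Q 1 2 * Q 2 0 = Q 0 1 := by
    have := congrFun (congrFun hadj 1) 0; simpa using this
  funext i
  fin_cases i
  · show Q.mulVec (vee (Q - Qᵀ)) 0 = vee (Q - Qᵀ) 0
    simp only [mulVec, vee, dotProduct, Fin.sum_univ_three, Matrix.sub_apply,
      Matrix.transpose_apply, Matrix.cons_val_zero, Matrix.cons_val_one, Matrix.head_cons,
      Matrix.cons_val_two, Matrix.tail_cons]
    linear_combination r12 - r21
  · show Q.mulVec (vee (Q - Qᵀ)) 1 = vee (Q - Qᵀ) 1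
    simp only [mulVec, vee, dotProduct, Fin.sum_univ_three, Matrix.sub_apply,
      Matrix.transpose_apply, Matrix.cons_val_zero, Matrix.cons_val_one, Matrix.head_cons,
      Matrix.cons_val_two, Matrix.tail_cons]
    linear_combination r02 - r20
  · show Q.mulVec (vee (Q - Qᵀ)) 2 = vee (Q - Qᵀ) 2
    simp only [mulVec, vee, dotProduct, Fin.sum_univ_three, Matrix.sub_apply,
      Matrix.transpose_apply, Matrix.cons_val_zero, Matrix.cons_val_one, Matrix.head_cons,
      Matrix.cons_val_two, Matrix.tail_cons]
    linear_combination r10 - r01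

theorem psi_dot (R Rd : ℝ → Matrix (Fin 3) (Fin 3) ℝ)
    (Ω Ωd : ℝ → Fin 3 → ℝ) (t : ℝ)
    (hSO : ∀ s, SO3 (R s)) (hSOd : ∀ s, SO3 (Rd s))
    (hR : ∀ s i j, HasDerivAt (fun τ => R τ i j) ((R s * hat (Ω s)) i j) s)
    (hRd : ∀ s i j, HasDerivAt (fun τ => Rd τ i j) ((Rd s * hat (Ωd s)) i j) s) :
    HasDerivAt (fun τ => Psi (R τ) (Rd τ))
      (dot (eR (R t) (Rd t)) (Ω t - ((R t)ᵀ * Rd t).mulVec (Ωd t))) t := by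
  have hPsi : ∀ A B : Matrix (Fin 3) (Fin 3) ℝ,
      Psi A B = 3/2 - 1/2 * ∑ j, ∑ i, B j i * A j i := by
    intro A B
    simp [Psi, Matrix.trace, Matrix.diag, Matrix.sub_apply, Matrix.mul_apply,
      Fin.sum_univ_three, Matrix.one_apply, Matrix.transpose_apply]
    ring
  have hfun : (fun τ => Psi (R τ) (Rd τ))
      = fun τ => 3/2 - 1/2 * ∑ j, ∑ i, Rd τ j i * R τ j i :=
    funext fun τ => hPsi _ _
  have hS : HasDerivAt (fun τ => ∑ j, ∑ i, Rd τ j i * R τ j i)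
      (∑ j, ∑ i, ((Rd t * hat (Ωd t)) j i * R t j i + Rd t j i * (R t * hat (Ω t)) j i)) t :=
    HasDerivAt.fun_sum fun j _ => HasDerivAt.fun_sum fun i _ => (hRd t j i).mul (hR t j i)
  have hD := (hS.const_mul (1/2 : ℝ)).const_sub (3/2 : ℝ)
  -- SO3 of Q = Rdᵀ R
  set A := R t with hA
  set B := Rd t with hB
  have hQ : SO3 (Bᵀ * A) := by
    constructor
    · have hBB : B * Bᵀ = 1 := mul_eq_one_comm.mp (hSOd t).1
      calc (Bᵀ * A)ᵀ * (Bᵀ * A) = Aᵀ * (B * Bᵀ) * A := by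
            rw [Matrix.transpose_mul, Matrix.transpose_transpose,
              Matrix.mul_assoc, Matrix.mul_assoc, Matrix.mul_assoc]
        _ = 1 := by rw [hBB, Matrix.mul_one, (hSO t).1]
    · rw [Matrix.det_mul, Matrix.det_transpose, (hSO t).2, (hSOd t).2, mul_one]
  have hfix := rot_fix hQ
  have hc0 := congrFun hfix 0
  have hc1 := congrFun hfix 1
  have hc2 := congrFun hfix 2
  simp only [mulVec, vee, dotProduct, Fin.sum_univ_three, Matrix.sub_apply,
    Matrix.transpose_apply, Matrix.cons_val_zero, Matrix.cons_val_one, Matrix.head_cons,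
    Matrix.cons_val_two, Matrix.tail_cons, Matrix.mul_apply] at hc0 hc1 hc2
  have hval : -(1/2 * ∑ j, ∑ i, ((B * hat (Ωd t)) j i * A j i + B j i * (A * hat (Ω t)) j i))
      = dot (eR A B) (Ω t - (Aᵀ * B).mulVec (Ωd t)) := by
    simp only [dot, eR, vee, mulVec, dotProduct, Fin.sum_univ_three, Matrix.sub_apply,
      Matrix.smul_apply, smul_eq_mul, Matrix.mul_apply, Matrix.transpose_apply, Pi.sub_apply,
      Matrix.cons_val_zero, Matrix.cons_val_one, Matrix.head_cons, Matrix.cons_val_two,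
      Matrix.tail_cons, hat, Matrix.of_apply, Matrix.cons_val']
    linear_combination ((1/2 : ℝ) * Ωd t 0) * hc0 + ((1/2 : ℝ) * Ωd t 1) * hc1
      + ((1/2 : ℝ) * Ωd t 2) * hc2
  rw [hfun, ← hval]
  convert hD using 1
end
end

section
/- Under the same setup (Ṙ = RΩ̂, Ṙ_d = R_dΩ̂_d, e_R = ((1/2)(R_dᵀR − RᵀR_d))ᵛ, e_Ω = Ω − RᵀR_dΩ_d), the time derivative of e_R satisfies ė_R = (1/2)(tr(RᵀR_d)I − RᵀR_d)e_Ω, and consequently ‖ė_R‖ ≤ ‖e_Ω‖. -/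
open Matrix
noncomputable section

lemma hat_T (y : Fin 3 → ℝ) : (hat y)ᵀ = -hat y := by
  ext i j; fin_cases i <;> fin_cases j <;> simp [hat]

lemma L1 (M : Matrix (Fin 3) (Fin 3) ℝ) (y : Fin 3 → ℝ) :
    M * hat y + hat y * Mᵀ = hat ((M.trace • (1 : Matrix (Fin 3) (Fin 3) ℝ) - Mᵀ) *ᵥ y) := by
  ext i j; fin_cases i <;> fin_cases j <;>
    simp [hat, Matrix.mul_apply, Matrix.vecMul, Matrix.mulVec, dotProduct, Fin.sum_univ_three,
      Matrix.trace_fin_three, Matrix.one_apply] <;> ring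

lemma L2 (M : Matrix (Fin 3) (Fin 3) ℝ) (y : Fin 3 → ℝ) :
    hat y * M + Mᵀ * hat y = hat ((M.trace • (1 : Matrix (Fin 3) (Fin 3) ℝ) - M) *ᵥ y) := by
  ext i j; fin_cases i <;> fin_cases j <;>
    simp [hat, Matrix.mul_apply, Matrix.vecMul, Matrix.mulVec, dotProduct, Fin.sum_univ_three,
      Matrix.trace_fin_three, Matrix.one_apply] <;> ring

lemma crossGen (M : Matrix (Fin 3) (Fin 3) ℝ) (y : Fin 3 → ℝ) :
    M * hat y * Mᵀ = hat ((M.adjugate)ᵀ *ᵥ y) := by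
  rw [Matrix.adjugate_fin_three]
  ext i j; fin_cases i <;> fin_cases j <;>
    simp [hat, Matrix.mul_apply, Matrix.vecMul, Matrix.mulVec, dotProduct, Fin.sum_univ_three] <;> ring

lemma genCH (M : Matrix (Fin 3) (Fin 3) ℝ) :
    M.adjugate = M * M - M.trace • M + (((M.trace)^2 - (M * M).trace)/2) • (1 : Matrix (Fin 3) (Fin 3) ℝ) := by
  rw [Matrix.adjugate_fin_three]
  ext i j; fin_cases i <;> fin_cases j <;>
    simp [Matrix.mul_apply, Fin.sum_univ_three, Matrix.trace_fin_three, Matrix.one_apply] <;> ring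

lemma hatsq (v : Fin 3 → ℝ) :
    hat v * hat v = Matrix.of (fun i j => v i * v j) - (dot v v) • (1 : Matrix (Fin 3) (Fin 3) ℝ) := by
  ext i j; fin_cases i <;> fin_cases j <;>
    simp [hat, dot, Matrix.mul_apply, Fin.sum_univ_three, Matrix.one_apply] <;> ring

lemma hat_vee_skew (M : Matrix (Fin 3) (Fin 3) ℝ) : hat (vee (M - Mᵀ)) = M - Mᵀ := by
  ext i j; fin_cases i <;> fin_cases j <;> simp [hat, vee] <;> ring

lemma hat_sub (a b : Fin 3 → ℝ) : hat (a - b) = hat a - hat b := by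
  ext i j; fin_cases i <;> fin_cases j <;> simp [hat] <;> ring

lemma hat_smul (r : ℝ) (a : Fin 3 → ℝ) : hat (r • a) = r • hat a := by
  ext i j; fin_cases i <;> fin_cases j <;> simp [hat] <;> ring

lemma lagrange (a b : Fin 3 → ℝ) :
    (dot a b)^2 + dot (cross a b) (cross a b) = dot a a * dot b b := by
  simp [dot, cross, Fin.sum_univ_three]; ring

lemma dot_self_nonneg (v : Fin 3 → ℝ) : 0 ≤ dot v v := by
  simp [dot, Fin.sum_univ_three]; nlinarith [sq_nonneg (v 0), sq_nonneg (v 1), sq_nonneg (v 2)]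

set_option maxHeartbeats 4000000 in
theorem eR_dot (R Rd : ℝ → Matrix (Fin 3) (Fin 3) ℝ)
    (Ω Ωd : ℝ → Fin 3 → ℝ) (t : ℝ)
    (hSO : ∀ s, SO3 (R s)) (hSOd : ∀ s, SO3 (Rd s))
    (hR : ∀ s i j, HasDerivAt (fun τ => R τ i j) ((R s * hat (Ω s)) i j) s)
    (hRd : ∀ s i j, HasDerivAt (fun τ => Rd τ i j) ((Rd s * hat (Ωd s)) i j) s)
    (eΩ : Fin 3 → ℝ) (heΩ : eΩ = Ω t - ((R t)ᵀ * Rd t).mulVec (Ωd t))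
    (eRdot : Fin 3 → ℝ)
    (heRdot : eRdot =
      (((1/2 : ℝ) • (((R t)ᵀ * Rd t).trace • (1 : Matrix (Fin 3) (Fin 3) ℝ) - (R t)ᵀ * Rd t)).mulVec eΩ)) :
    (∀ i, HasDerivAt (fun τ => eR (R τ) (Rd τ) i) (eRdot i) t) ∧ _root_.enorm eRdot ≤ _root_.enorm eΩ := by
  obtain ⟨hR1, hRdet⟩ := hSO t
  obtain ⟨hRd1, hRddet⟩ := hSOd t
  set Q : Matrix (Fin 3) (Fin 3) ℝ := (R t)ᵀ * Rd t with hQdef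
  set c : ℝ := Q.trace with hcdef
  have hRR : R t * (R t)ᵀ = 1 := mul_eq_one_comm.mp hR1
  have hQ1 : Qᵀ * Q = 1 := by
    rw [hQdef, transpose_mul, transpose_transpose, Matrix.mul_assoc, ← Matrix.mul_assoc (R t),
      hRR, Matrix.one_mul, hRd1]
  have hQQT : Q * Qᵀ = 1 := mul_eq_one_comm.mp hQ1
  have hQdet : Q.det = 1 := by
    rw [hQdef, det_mul, det_transpose, hRdet, hRddet, mul_one]
  have hadj : Q.adjugate = Qᵀ := by
    calc Q.adjugate = (Qᵀ * Q) * Q.adjugate := by rw [hQ1, Matrix.one_mul]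
      _ = Qᵀ * (Q * Q.adjugate) := by rw [Matrix.mul_assoc]
      _ = Qᵀ := by rw [Matrix.mul_adjugate, hQdet, one_smul, Matrix.mul_one]
  have hCH0 := genCH Q
  rw [hadj] at hCH0
  have he : ((Q.trace)^2 - (Q * Q).trace)/2 = c := by
    have h := congrArg Matrix.trace hCH0
    simp [Matrix.trace_add, Matrix.trace_sub, Matrix.trace_smul, Matrix.trace_one,
      Matrix.trace_transpose, smul_eq_mul] at h
    rw [← hcdef] at h ⊢
    linarith
  rw [he] at hCH0
  rw [← hcdef] at hCH0
  have hsq : Q * Q = Qᵀ + c • Q - c • (1 : Matrix (Fin 3) (Fin 3) ℝ) := by rw [hCH0]; abel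
  have hsqT : Qᵀ * Qᵀ = Q + c • Qᵀ - c • (1 : Matrix (Fin 3) (Fin 3) ℝ) := by
    have h := congrArg Matrix.transpose hsq
    simpa [Matrix.transpose_mul, Matrix.transpose_add, Matrix.transpose_sub,
      Matrix.transpose_smul, Matrix.transpose_one, Matrix.transpose_transpose] using h
  set z : Fin 3 → ℝ := Q *ᵥ Ωd t with hzdef
  have hCE : Q * hat (Ωd t) = hat z * Q := by
    have h1 : Q * hat (Ωd t) * Qᵀ = hat z := by rw [crossGen, hadj, transpose_transpose, hzdef]
    calc Q * hat (Ωd t) = Q * hat (Ωd t) * (Qᵀ * Q) := by rw [hQ1, Matrix.mul_one]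
      _ = (Q * hat (Ωd t) * Qᵀ) * Q := (Matrix.mul_assoc _ _ _).symm
      _ = hat z * Q := by rw [h1]
  have hCE' : hat (Ωd t) * Qᵀ = Qᵀ * hat z := by
    have h := congrArg Matrix.transpose hCE
    simpa [Matrix.transpose_mul, hat_T, Matrix.mul_neg, Matrix.neg_mul] using h
  have hFirst : Qᵀ * hat (Ω t) + hat (Ω t) * Q = hat ((c • (1 : Matrix (Fin 3) (Fin 3) ℝ) - Q) *ᵥ Ω t) := by
    have h := L1 Qᵀ (Ω t)
    rw [transpose_transpose, Matrix.trace_transpose, ← hcdef] at h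
    exact h
  have hSecond : hat (Ωd t) * Qᵀ + Q * hat (Ωd t) = hat ((c • (1 : Matrix (Fin 3) (Fin 3) ℝ) - Q) *ᵥ z) := by
    rw [hCE', hCE, add_comm]
    have h := L2 Q z
    rw [← hcdef] at h
    exact h
  have hA : (Rd t)ᵀ * R t = Qᵀ := by rw [hQdef, transpose_mul, transpose_transpose]
  have hKEY : (1/2 : ℝ) • (((Rd t * hat (Ωd t))ᵀ * R t + (Rd t)ᵀ * (R t * hat (Ω t)))
      - ((Rd t * hat (Ωd t))ᵀ * R t + (Rd t)ᵀ * (R t * hat (Ω t)))ᵀ) = hat eRdot := by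
    have hS : (Rd t * hat (Ωd t))ᵀ * R t + (Rd t)ᵀ * (R t * hat (Ω t))
        = -(hat (Ωd t) * Qᵀ) + Qᵀ * hat (Ω t) := by
      rw [transpose_mul, hat_T, Matrix.neg_mul, Matrix.neg_mul, Matrix.mul_assoc,
        ← Matrix.mul_assoc ((Rd t)ᵀ), hA]
    rw [hS]
    have hD : (-(hat (Ωd t) * Qᵀ) + Qᵀ * hat (Ω t)) - (-(hat (Ωd t) * Qᵀ) + Qᵀ * hat (Ω t))ᵀ
        = (Qᵀ * hat (Ω t) + hat (Ω t) * Q) - (hat (Ωd t) * Qᵀ + Q * hat (Ωd t)) := by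
      simp only [transpose_add, transpose_neg, transpose_mul, hat_T, transpose_transpose,
        Matrix.mul_neg, Matrix.neg_mul, neg_neg]
      abel
    rw [hD, hFirst, hSecond, ← hat_sub, ← hat_smul]
    congr 1
    rw [heRdot, heΩ, ← Matrix.mulVec_sub, smul_mulVec]
  constructor
  · intro i
    have hder : ∀ a b : Fin 3, HasDerivAt
        (fun τ => (1/2 : ℝ) * ((∑ k, Rd τ k a * R τ k b) - ∑ k, R τ k a * Rd τ k b))
        ((1/2 : ℝ) * ((∑ k, ((Rd t * hat (Ωd t)) k a * R t k b + Rd t k a * (R t * hat (Ω t)) k b))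
          - ∑ k, ((R t * hat (Ω t)) k a * Rd t k b + R t k a * (Rd t * hat (Ωd t)) k b))) t := by
      intro a b
      exact ((HasDerivAt.fun_sum fun k _ => (hRd t k a).mul (hR t k b)).sub
        (HasDerivAt.fun_sum fun k _ => (hR t k a).mul (hRd t k b))).const_mul _
    fin_cases i
    · have hfun : (fun τ => eR (R τ) (Rd τ) (0 : Fin 3))
          = fun τ => (1/2 : ℝ) * ((∑ k, Rd τ k 2 * R τ k 1) - ∑ k, R τ k 2 * Rd τ k 1) := by
        funext τ
        simp [eR, vee, Matrix.smul_apply, Matrix.sub_apply, Matrix.mul_apply,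
          Matrix.transpose_apply, smul_eq_mul]
      show HasDerivAt (fun τ => eR (R τ) (Rd τ) (0 : Fin 3)) (eRdot 0) t
      rw [hfun]
      convert hder 2 1 using 1
      have hk := congrFun (congrFun hKEY 2) 1
      simp only [Matrix.smul_apply, Matrix.sub_apply, Matrix.add_apply, Matrix.transpose_apply,
        Matrix.mul_apply, Fin.sum_univ_three, smul_eq_mul, hat, Matrix.cons_val', Matrix.cons_val_zero,
        Matrix.cons_val_one, Matrix.head_cons, Matrix.empty_val', Matrix.cons_val_fin_one,
        Matrix.head_fin_const, Matrix.of_apply, Matrix.cons_val_two, Matrix.tail_cons] at hk ⊢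
      linear_combination -hk
    · have hfun : (fun τ => eR (R τ) (Rd τ) (1 : Fin 3))
          = fun τ => (1/2 : ℝ) * ((∑ k, Rd τ k 0 * R τ k 2) - ∑ k, R τ k 0 * Rd τ k 2) := by
        funext τ
        simp [eR, vee, Matrix.smul_apply, Matrix.sub_apply, Matrix.mul_apply,
          Matrix.transpose_apply, smul_eq_mul]
      show HasDerivAt (fun τ => eR (R τ) (Rd τ) (1 : Fin 3)) (eRdot 1) t
      rw [hfun]
      convert hder 0 2 using 1
      have hk := congrFun (congrFun hKEY 0) 2
      simp only [Matrix.smul_apply, Matrix.sub_apply, Matrix.add_apply, Matrix.transpose_apply,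
        Matrix.mul_apply, Fin.sum_univ_three, smul_eq_mul, hat, Matrix.cons_val', Matrix.cons_val_zero,
        Matrix.cons_val_one, Matrix.head_cons, Matrix.empty_val', Matrix.cons_val_fin_one,
        Matrix.head_fin_const, Matrix.of_apply, Matrix.cons_val_two, Matrix.tail_cons] at hk ⊢
      linear_combination -hk
    · have hfun : (fun τ => eR (R τ) (Rd τ) (2 : Fin 3))
          = fun τ => (1/2 : ℝ) * ((∑ k, Rd τ k 1 * R τ k 0) - ∑ k, R τ k 1 * Rd τ k 0) := by
        funext τ
        simp [eR, vee, Matrix.smul_apply, Matrix.sub_apply, Matrix.mul_apply,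
          Matrix.transpose_apply, smul_eq_mul]
      show HasDerivAt (fun τ => eR (R τ) (Rd τ) (2 : Fin 3)) (eRdot 2) t
      rw [hfun]
      convert hder 1 0 using 1
      have hk := congrFun (congrFun hKEY 1) 0
      simp only [Matrix.smul_apply, Matrix.sub_apply, Matrix.add_apply, Matrix.transpose_apply,
        Matrix.mul_apply, Fin.sum_univ_three, smul_eq_mul, hat, Matrix.cons_val', Matrix.cons_val_zero,
        Matrix.cons_val_one, Matrix.head_cons, Matrix.empty_val', Matrix.cons_val_fin_one,
        Matrix.head_fin_const, Matrix.of_apply, Matrix.cons_val_two, Matrix.tail_cons] at hk ⊢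
      linear_combination -hk
  · -- norm bound
    have hhat : hat (vee (Q - Qᵀ)) = Q - Qᵀ := hat_vee_skew Q
    set w : Fin 3 → ℝ := vee (Q - Qᵀ) with hwdef
    have hOf : Matrix.of (fun i j => w i * w j)
        = (Qᵀ + c • Q - c • (1:Matrix (Fin 3) (Fin 3) ℝ)) + (Q + c • Qᵀ - c • 1) - 1 - 1 + (dot w w) • 1 := by
      have h1 := hatsq w
      rw [hhat] at h1
      have h2 : (Q - Qᵀ) * (Q - Qᵀ) = Q * Q + Qᵀ * Qᵀ - Q * Qᵀ - Qᵀ * Q := by noncomm_ring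
      rw [hsq, hsqT, hQQT, hQ1] at h2
      have h3 : Matrix.of (fun i j => w i * w j) = (Q - Qᵀ) * (Q - Qᵀ) + (dot w w) • (1:Matrix (Fin 3) (Fin 3) ℝ) := by
        rw [h1]; abel
      rw [h3, h2]
    have htr : dot w w = (1+c)*(3-c) := by
      have h := congrArg Matrix.trace hOf
      simp only [Matrix.trace_add, Matrix.trace_sub, Matrix.trace_smul, Matrix.trace_one,
        Matrix.trace_transpose, smul_eq_mul, Fintype.card_fin, Nat.cast_ofNat, ← hcdef] at h
      have htrw : Matrix.trace (Matrix.of (fun i j => w i * w j)) = dot w w := by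
        simp [Matrix.trace, Matrix.diag, dot, Fin.sum_univ_three]
      rw [htrw] at h
      linear_combination (-1/2 : ℝ) * h
    have hM1 : Matrix.of (fun i j => w i * w j)
        = (1+c) • (Q + Qᵀ) - ((1+c)*(c-1)) • (1:Matrix (Fin 3) (Fin 3) ℝ) := by
      rw [hOf, htr]
      module
    have hE : ∀ i j : Fin 3, w i * w j
        = (1 + c) * Q i j + (1 + c) * Q j i - if i = j then (1 + c) * (c - 1) else 0 := by
      intro i j
      have h := congrFun (congrFun hM1 i) j
      simpa [Matrix.of_apply, Matrix.add_apply, Matrix.sub_apply, Matrix.smul_apply,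
        Matrix.one_apply, Matrix.transpose_apply, smul_eq_mul, mul_ite] using h
    have e00 : w 0 * w 0 = (1+c) * (Q 0 0 + Q 0 0) - (1+c)*(c-1) := by
      have h := hE 0 0; simp at h; linear_combination h
    have e11 : w 1 * w 1 = (1+c) * (Q 1 1 + Q 1 1) - (1+c)*(c-1) := by
      have h := hE 1 1; simp at h; linear_combination h
    have e22 : w 2 * w 2 = (1+c) * (Q 2 2 + Q 2 2) - (1+c)*(c-1) := by
      have h := hE 2 2; simp at h; linear_combination h
    have e01 : w 0 * w 1 = (1+c) * (Q 0 1 + Q 1 0) := by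
      have h := hE 0 1; simp at h; linear_combination h
    have e02 : w 0 * w 2 = (1+c) * (Q 0 2 + Q 2 0) := by
      have h := hE 0 2; simp at h; linear_combination h
    have e12 : w 1 * w 2 = (1+c) * (Q 1 2 + Q 2 1) := by
      have h := hE 1 2; simp at h; linear_combination h
    have hO : ∀ i j : Fin 3, (Q 0 i * Q 0 j + Q 1 i * Q 1 j + Q 2 i * Q 2 j) = (if i = j then 1 else 0) := by
      intro i j
      have h := congrFun (congrFun hQ1 i) j
      simpa [Matrix.mul_apply, Matrix.transpose_apply, Matrix.one_apply, Fin.sum_univ_three] using h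
    have o00 : Q 0 0 * Q 0 0 + Q 1 0 * Q 1 0 + Q 2 0 * Q 2 0 = 1 := by simpa using hO 0 0
    have o11 : Q 0 1 * Q 0 1 + Q 1 1 * Q 1 1 + Q 2 1 * Q 2 1 = 1 := by simpa using hO 1 1
    have o22 : Q 0 2 * Q 0 2 + Q 1 2 * Q 1 2 + Q 2 2 * Q 2 2 = 1 := by simpa using hO 2 2
    have o01 : Q 0 0 * Q 0 1 + Q 1 0 * Q 1 1 + Q 2 0 * Q 2 1 = 0 := by simpa using hO 0 1
    have o02 : Q 0 0 * Q 0 2 + Q 1 0 * Q 1 2 + Q 2 0 * Q 2 2 = 0 := by simpa using hO 0 2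
    have o12 : Q 0 1 * Q 0 2 + Q 1 1 * Q 1 2 + Q 2 1 * Q 2 2 = 0 := by simpa using hO 1 2
    have hp : 0 ≤ dot eΩ eΩ := dot_self_nonneg _
    have hQx : dot (Q *ᵥ eΩ) (Q *ᵥ eΩ) = dot eΩ eΩ := by
      simp only [dot, Matrix.mulVec, dotProduct, Fin.sum_univ_three]
      linear_combination (eΩ 0 * eΩ 0) * o00 + (eΩ 1 * eΩ 1) * o11 + (eΩ 2 * eΩ 2) * o22
        + (2 * eΩ 0 * eΩ 1) * o01 + (2 * eΩ 0 * eΩ 2) * o02 + (2 * eΩ 1 * eΩ 2) * o12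
    have hs_le : dot eΩ (Q *ᵥ eΩ) ≤ dot eΩ eΩ := by
      have hlag := lagrange eΩ (Q *ᵥ eΩ)
      rw [hQx] at hlag
      nlinarith [dot_self_nonneg (cross eΩ (Q *ᵥ eΩ)), hp,
        sq_nonneg (dot eΩ (Q *ᵥ eΩ) - dot eΩ eΩ), sq_nonneg (dot eΩ (Q *ᵥ eΩ) + dot eΩ eΩ)]
    have hQF : (1+c) * (2 * dot eΩ (Q *ᵥ eΩ) - (c-1) * dot eΩ eΩ) = (dot w eΩ)^2 := by
      simp only [dot, Matrix.mulVec, dotProduct, Fin.sum_univ_three]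
      linear_combination -((eΩ 0 * eΩ 0) * e00 + (eΩ 1 * eΩ 1) * e11 + (eΩ 2 * eΩ 2) * e22
        + (2 * eΩ 0 * eΩ 1) * e01 + (2 * eΩ 0 * eΩ 2) * e02 + (2 * eΩ 1 * eΩ 2) * e12)
    have hval : dot eRdot eRdot = (1/4)*((c^2) * dot eΩ eΩ - 2*c* dot eΩ (Q *ᵥ eΩ)
        + dot (Q *ᵥ eΩ) (Q *ᵥ eΩ)) := by
      rw [heRdot]
      simp [dot, Matrix.mulVec, dotProduct, Fin.sum_univ_three, Matrix.smul_apply,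
        Matrix.sub_apply, Matrix.one_apply, smul_eq_mul]
      ring
    have hbound : dot eRdot eRdot ≤ dot eΩ eΩ := by
      rw [hval, hQx]
      have hwx : (0:ℝ) ≤ (1+c) * (2 * dot eΩ (Q *ᵥ eΩ) - (c-1) * dot eΩ eΩ) := by
        rw [hQF]; positivity
      have hww0 : (0:ℝ) ≤ (1+c)*(3-c) := htr ▸ dot_self_nonneg w
      obtain ⟨s, hs⟩ : ∃ a, dot eΩ (Q *ᵥ eΩ) = a := ⟨_, rfl⟩
      obtain ⟨p, hpe⟩ : ∃ a, dot eΩ eΩ = a := ⟨_, rfl⟩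
      obtain ⟨c', hc'⟩ : ∃ a, c = a := ⟨_, rfl⟩
      rw [hs, hpe, hc'] at hwx ⊢
      rw [hs, hpe] at hs_le
      rw [hpe] at hp
      rw [hc'] at hww0
      clear hs hpe hc' hval hQx hQF hKEY hCH0 hsq hsqT hCE hCE' hFirst hSecond hOf hM1 hhat htr hE hO
      clear e00 e11 e22 e01 e02 e12 o00 o11 o22 o01 o02 o12 hadj hA hR1 hRd1 hRR hQ1 hQQT heRdot heΩ hR hRd hSO hSOd
      rcases le_or_gt 0 c' with hc | hc
      · have h2s : 0 ≤ 2*s - (c'-1)*p := by nlinarith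
        have hc3 : c' ≤ 3 := by nlinarith
        nlinarith [mul_nonneg hc h2s, mul_nonneg (by linarith : (0:ℝ) ≤ 3 - c') hp]
      · have hcm : -1 ≤ c' := by nlinarith
        nlinarith [mul_le_mul_of_nonneg_left hs_le (by linarith : (0:ℝ) ≤ -c'),
          mul_nonneg (mul_nonneg (by linarith : (0:ℝ) ≤ 3 - c') (by linarith : (0:ℝ) ≤ c' + 1)) hp]
    exact Real.sqrt_le_sqrt hbound
end
end

section
/- For any A ∈ SO(3), the matrix (1/2)(tr(A)I − A) has operator norm at most 1. Equivalently, for all y ∈ ℝ³, ‖(1/2)(tr(A)I − A)y‖ ≤ ‖y‖. -/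
open Matrix
noncomputable section

/- ---------- auxiliary lemmas ---------- -/

theorem aux_dot_mulVec (A : Matrix (Fin 3) (Fin 3) ℝ) (x z : Fin 3 → ℝ) :
    dot x (A.mulVec z) = dot (Aᵀ.mulVec x) z := by
  show x ⬝ᵥ (A.mulVec z) = (Aᵀ.mulVec x) ⬝ᵥ z
  rw [Matrix.dotProduct_mulVec, Matrix.mulVec_transpose]

theorem aux_dot_comm (x z : Fin 3 → ℝ) : dot x z = dot z x := dotProduct_comm x z

theorem aux_dot_add (x a b : Fin 3 → ℝ) : dot x (a + b) = dot x a + dot x b :=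
  dotProduct_add x a b

theorem aux_dot_cs (x z : Fin 3 → ℝ) : (dot x z)^2 ≤ dot x x * dot z z := by
  simp only [dot, Fin.sum_univ_three]
  nlinarith [sq_nonneg (x 0 * z 1 - x 1 * z 0), sq_nonneg (x 0 * z 2 - x 2 * z 0),
    sq_nonneg (x 1 * z 2 - x 2 * z 1)]

theorem aux_dot_nonneg (x : Fin 3 → ℝ) : 0 ≤ dot x x := by
  simp only [dot, Fin.sum_univ_three]
  nlinarith [mul_self_nonneg (x 0), mul_self_nonneg (x 1), mul_self_nonneg (x 2)]

theorem aux_dot_add_left (a b x : Fin 3 → ℝ) : dot (a + b) x = dot a x + dot b x :=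
  add_dotProduct a b x

/-- Cayley–Hamilton-type identity for 3×3 matrices. -/
theorem aux_ch3 (M : Matrix (Fin 3) (Fin 3) ℝ) :
    M * M = M.trace • M - (M.adjugate).trace • 1 + M.adjugate := by
  ext i j
  simp [Matrix.adjugate_fin_three, Matrix.mul_apply, Matrix.trace_fin_three,
    Fin.sum_univ_three, Matrix.one_apply]
  fin_cases i <;> fin_cases j <;> simp <;> ring

/-- The scalar core inequality. -/
theorem aux_core (t n p : ℝ) (hn : 0 ≤ n) (ht1 : -1 ≤ t) (ht3 : t ≤ 3)
    (hC : 4*p^2 ≤ n*(2*(t+1)*p - (2*t-2)*n)) :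
    t^2*n - 2*t*p + n ≤ 4*n := by
  have h3t : 0 ≤ (3 - t) * n := mul_nonneg (by linarith) hn
  have hpn : p ≤ n := by
    by_contra h
    push_neg at h
    have ha : 0 < p - n := by linarith
    have hb : 0 < 2*p - (t-1)*n := by linarith
    nlinarith [mul_pos ha hb]
  have hp2 : (t-1)*n ≤ 2*p := by
    by_contra h
    push_neg at h
    have hb : 0 < (t-1)*n - 2*p := by linarith
    have ha : 0 < n - p := by linarith
    nlinarith [mul_pos ha hb]
  rcases le_or_gt 0 t with ht | ht
  · nlinarith [mul_nonneg ht (sub_nonneg.mpr hp2)]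
  · nlinarith [mul_nonneg (le_of_lt (neg_pos.mpr ht)) (sub_nonneg.mpr hpn)]

theorem half_trace_sub_opnorm_le_one (A : Matrix (Fin 3) (Fin 3) ℝ)
    (hA : SO3 A) (y : Fin 3 → ℝ) :
    _root_.enorm ((((1/2 : ℝ) • (A.trace • (1 : Matrix (Fin 3) (Fin 3) ℝ) - A)).mulVec y)) ≤ _root_.enorm y := by
  obtain ⟨horth, hdet⟩ := hA
  have hAAT : A * Aᵀ = 1 := mul_eq_one_comm.mp horth
  have hadj : A.adjugate = Aᵀ := by
    calc A.adjugate = (Aᵀ * A) * A.adjugate := by rw [horth, one_mul]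
    _ = Aᵀ * (A * A.adjugate) := by rw [Matrix.mul_assoc]
    _ = Aᵀ := by rw [Matrix.mul_adjugate, hdet, one_smul, mul_one]
  have hCH : A * A = A.trace • A - A.trace • 1 + Aᵀ := by
    have := aux_ch3 A
    rwa [hadj, Matrix.trace_transpose] at this
  set t := A.trace with htdef
  -- trace bounds
  have htr2 : (A*A).trace = t^2 - 2*t := by
    rw [hCH]
    simp [Matrix.trace_smul, Matrix.trace_one, Matrix.trace_transpose, smul_eq_mul]
    ring
  have htr3 : (Aᵀ*A).trace = 3 := by rw [horth]; simp
  have hle : (A*A).trace ≤ (Aᵀ*A).trace := by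
    simp only [Matrix.trace_fin_three, Matrix.mul_apply, Fin.sum_univ_three,
      Matrix.transpose_apply]
    nlinarith [sq_nonneg (A 0 1 - A 1 0), sq_nonneg (A 0 2 - A 2 0), sq_nonneg (A 1 2 - A 2 1)]
  have htineq : t^2 - 2*t ≤ 3 := by rw [← htr2, ← htr3] at *; linarith
  have ht3 : t ≤ 3 := by nlinarith
  have ht1 : -1 ≤ t := by nlinarith
  -- dot product identities
  have e1 : dot (A.mulVec y) (A.mulVec y) = dot y y := by
    rw [aux_dot_mulVec, Matrix.mulVec_mulVec, horth, Matrix.one_mulVec]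
  have e2 : dot (Aᵀ.mulVec y) (Aᵀ.mulVec y) = dot y y := by
    rw [aux_dot_mulVec, Matrix.mulVec_mulVec, Matrix.transpose_transpose, hAAT,
      Matrix.one_mulVec]
  have e5 : dot y (Aᵀ.mulVec y) = dot y (A.mulVec y) := by
    rw [aux_dot_mulVec, Matrix.transpose_transpose, aux_dot_comm]
  have e3 : dot (A.mulVec y) (Aᵀ.mulVec y) = dot y ((A*A).mulVec y) := by
    rw [aux_dot_mulVec, Matrix.transpose_transpose, Matrix.mulVec_mulVec, aux_dot_comm]
  have e4 : dot y ((A*A).mulVec y) = (t+1) * dot y (A.mulVec y) - t * dot y y := by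
    rw [hCH]
    simp only [dot, Matrix.add_mulVec, Matrix.sub_mulVec, Matrix.smul_mulVec,
      Matrix.one_mulVec, Pi.add_apply, Pi.sub_apply, Pi.smul_apply, smul_eq_mul,
      Fin.sum_univ_three]
    have := e5
    simp only [dot, Fin.sum_univ_three] at this
    linear_combination this
  set nn := dot y y with hnn_def
  set p := dot y (A.mulVec y) with hp_def
  have hnn : 0 ≤ nn := aux_dot_nonneg y
  -- Cauchy-Schwarz on y and Sy
  have hC : 4*p^2 ≤ nn*(2*(t+1)*p - (2*t-2)*nn) := by
    have hcs := aux_dot_cs y (A.mulVec y + Aᵀ.mulVec y)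
    have hL : dot y (A.mulVec y + Aᵀ.mulVec y) = 2*p := by
      rw [aux_dot_add, e5]; ring
    have hR : dot (A.mulVec y + Aᵀ.mulVec y) (A.mulVec y + Aᵀ.mulVec y)
        = 2*(t+1)*p - (2*t-2)*nn := by
      rw [aux_dot_add_left, aux_dot_add, aux_dot_add, e1, e2,
        aux_dot_comm (Aᵀ.mulVec y) (A.mulVec y), e3, e4]
      ring
    rw [hL, hR] at hcs
    nlinarith [hcs]
  -- compute the squared norm of the image
  have hBy : dot ((((1/2 : ℝ) • (t • (1 : Matrix (Fin 3) (Fin 3) ℝ) - A)).mulVec y))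
      ((((1/2 : ℝ) • (t • (1 : Matrix (Fin 3) (Fin 3) ℝ) - A)).mulVec y))
      = (t^2*nn - 2*t*p + nn)/4 := by
    have hmv : (((1/2 : ℝ) • (t • (1 : Matrix (Fin 3) (Fin 3) ℝ) - A)).mulVec y)
        = (1/2 : ℝ) • (t • y - A.mulVec y) := by
      rw [Matrix.smul_mulVec, Matrix.sub_mulVec, Matrix.smul_mulVec,
        Matrix.one_mulVec]
    rw [hmv]
    have he1 := e1
    rw [hnn_def] at he1
    rw [hnn_def, hp_def]
    simp only [dot, Matrix.mulVec, dotProduct, Pi.smul_apply, Pi.sub_apply,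
      Fin.sum_univ_three, smul_eq_mul] at he1 ⊢
    linear_combination he1 / 4
  have hfin : (t^2*nn - 2*t*p + nn)/4 ≤ nn := by
    have := aux_core t nn p hnn ht1 ht3 hC
    linarith
  unfold _root_.enorm
  apply Real.sqrt_le_sqrt
  rw [hBy]
  exact hfin
end
end

section
/- For any R, R_d ∈ SO(3), ‖e_R‖ ≤ 1, where e_R = ((1/2)(R_dᵀR − RᵀR_d))ᵛ. -/
open Matrix
noncomputable section

theorem eR_norm_le_one (R Rd : Matrix (Fin 3) (Fin 3) ℝ)
    (hR : SO3 R) (hRd : SO3 Rd) :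
    enorm3 (eR R Rd) ≤ 1 := by
  obtain ⟨hR1, hR2⟩ := hR
  obtain ⟨hRd1, hRd2⟩ := hRd
  set Q := Rdᵀ * R with hQdef
  have hRdRd : Rd * Rdᵀ = 1 := by
    rw [mul_eq_one_comm] at hRd1; exact hRd1
  have hQ1 : Qᵀ * Q = 1 := by
    simp only [hQdef, Matrix.transpose_mul, Matrix.transpose_transpose]
    calc Rᵀ * Rd * (Rdᵀ * R) = Rᵀ * (Rd * Rdᵀ) * R := by
          simp [Matrix.mul_assoc]
      _ = 1 := by rw [hRdRd]; simp [hR1]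
  have hQ2 : Q.det = 1 := by
    rw [hQdef, Matrix.det_mul, Matrix.det_transpose, hRd2, hR2, one_mul]
  have hRtRd : Rᵀ * Rd = Qᵀ := by
    simp [hQdef, Matrix.transpose_mul]
  have key : Qᵀ * Q = 1 → Q.det = 1 → dot (eR R Rd) (eR R Rd) ≤ 1 := by
    intro h1 h2
    have e00 := congrFun (congrFun h1 0) 0
    have e01 := congrFun (congrFun h1 0) 1
    have e02 := congrFun (congrFun h1 0) 2
    have e11 := congrFun (congrFun h1 1) 1
    have e12 := congrFun (congrFun h1 1) 2
    have e22 := congrFun (congrFun h1 2) 2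
    simp only [Matrix.mul_apply, Matrix.transpose_apply, Fin.sum_univ_three,
      Matrix.one_apply_eq, Matrix.one_apply_ne, ne_eq, Fin.reduceEq,
      not_false_eq_true] at e00 e01 e02 e11 e12 e22
    have hQQt : Q * Qᵀ = 1 := by rw [mul_eq_one_comm] at h1; exact h1
    have hadj : Q.adjugate = Qᵀ := by
      have hma := Matrix.mul_adjugate Q
      rw [h2, one_smul] at hma
      calc Q.adjugate = (Qᵀ * Q) * Q.adjugate := by rw [h1, Matrix.one_mul]
        _ = Qᵀ * (Q * Q.adjugate) := by rw [Matrix.mul_assoc]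
        _ = Qᵀ := by rw [hma, Matrix.mul_one]
    rw [Matrix.adjugate_fin_three] at hadj
    have a00 := congrFun (congrFun hadj 0) 0
    have a11 := congrFun (congrFun hadj 1) 1
    have a22 := congrFun (congrFun hadj 2) 2
    simp only [Matrix.transpose_apply, Matrix.of_apply, Matrix.cons_val', Matrix.cons_val_zero,
      Matrix.cons_val_one, Matrix.head_cons, Matrix.cons_val_two,
      Matrix.tail_cons, Matrix.empty_val', Matrix.cons_val_fin_one,
      Matrix.head_fin_const] at a00 a11 a22
    simp only [dot, eR, vee, hRtRd, Fin.sum_univ_three]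
    simp only [Matrix.smul_apply, Matrix.sub_apply, Matrix.transpose_apply,
      Matrix.cons_val', Matrix.cons_val_zero, Matrix.cons_val_one,
      Matrix.head_cons, Matrix.cons_val_two, Matrix.tail_cons, smul_eq_mul, ← hQdef]
    nlinarith [sq_nonneg (Q 0 0 + Q 1 1 + Q 2 2 - 1), e00, e11, e22, a00, a11, a22]
  have hdot := key hQ1 hQ2
  have hnn : (0:ℝ) ≤ 1 := zero_le_one
  rw [enorm3]
  calc Real.sqrt (dot (eR R Rd) (eR R Rd)) ≤ Real.sqrt 1 :=
        Real.sqrt_le_sqrt hdot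
    _ = 1 := Real.sqrt_one
end
end

section
/- Let J be a symmetric positive-definite 3×3 matrix with eigenvalue bounds λ_m, λ_M and let Ω, Ω_d ∈ ℝ³ with e_Ω = Ω − RᵀR_dΩ_d for R, R_d ∈ SO(3). Then JΩ̇ satisfies the identity: if Ω̇ is given by the attitude dynamics JΩ̇ = −Ω×JΩ + M + Δ_R with M = −k_Re_R − k_Ωe_Ω − k_Ie_I + (RᵀR_dΩ_d)×(J RᵀR_dΩ_d) + J RᵀR_d Ω̇_d, and Ṙ = RΩ̂, Ṙ_d = R_dΩ̂_d, then J ė_Ω = (Je_Ω + d)×e_Ω − k_Re_R − k_Ωe_Ω − k_Ie_I + Δ_R, where d = (2J − tr(J)I)RᵀR_dΩ_d. -/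
open Matrix
noncomputable section

set_option maxHeartbeats 2000000 in
lemma key_cross (J : Matrix (Fin 3) (Fin 3) ℝ) (hJ : J.IsSymm) (x v : Fin 3 → ℝ) :
    cross (J.mulVec (x - v) + ((2 : ℝ) • J - J.trace • (1 : Matrix (Fin 3) (Fin 3) ℝ)).mulVec v)
        (x - v)
      = -(cross x (J.mulVec x)) + cross v (J.mulVec v) + J.mulVec (cross x v) := by
  have h01 := hJ.apply 0 1
  have h02 := hJ.apply 0 2
  have h12 := hJ.apply 1 2
  funext i
  fin_cases i <;>
  · simp [cross, Matrix.mulVec, dotProduct, Matrix.trace, Matrix.diag,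
      Fin.sum_univ_three, Matrix.one_apply, Matrix.smul_apply, Matrix.sub_apply,
      Pi.sub_apply]
    simp only [h01, h02, h12]
    ring

set_option maxHeartbeats 2000000 in
theorem attitude_error_dynamics
    (J : Matrix (Fin 3) (Fin 3) ℝ) (hJsymm : J.IsSymm) (hJpos : J.PosDef)
    (lm lM : ℝ) (hl : 0 < lm ∧ lm ≤ lM)
    (hRayleigh : ∀ x : Fin 3 → ℝ, lm * dot x x ≤ dot x (J.mulVec x) ∧
      dot x (J.mulVec x) ≤ lM * dot x x)
    (kR kΩ kI : ℝ) (hkR : 0 < kR) (hkΩ : 0 < kΩ) (hkI : 0 < kI)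
    (eI ΔR : Fin 3 → ℝ)
    (R Rd : ℝ → Matrix (Fin 3) (Fin 3) ℝ) (Ω Ωd Ω' Ωd' : ℝ → Fin 3 → ℝ) (t : ℝ)
    (hSO : ∀ s, SO3 (R s)) (hSOd : ∀ s, SO3 (Rd s))
    (hR : ∀ s i j, HasDerivAt (fun τ => R τ i j) ((R s * hat (Ω s)) i j) s)
    (hRd : ∀ s i j, HasDerivAt (fun τ => Rd τ i j) ((Rd s * hat (Ωd s)) i j) s)
    (hΩ : ∀ s i, HasDerivAt (fun τ => Ω τ i) (Ω' s i) s)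
    (hΩd : ∀ s i, HasDerivAt (fun τ => Ωd τ i) (Ωd' s i) s)
    (M : Fin 3 → ℝ)
    (hM : M = -(kR • eR (R t) (Rd t)) - kΩ • (Ω t - ((R t)ᵀ * Rd t).mulVec (Ωd t)) - kI • eI
      + cross (((R t)ᵀ * Rd t).mulVec (Ωd t)) (J.mulVec (((R t)ᵀ * Rd t).mulVec (Ωd t)))
      + J.mulVec (((R t)ᵀ * Rd t).mulVec (Ωd' t)))
    (hdyn : J.mulVec (Ω' t) = -(cross (Ω t) (J.mulVec (Ω t))) + M + ΔR)
    (d : Fin 3 → ℝ)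
    (hd : d = ((2 : ℝ) • J - J.trace • (1 : Matrix (Fin 3) (Fin 3) ℝ)).mulVec
      (((R t)ᵀ * Rd t).mulVec (Ωd t))) :
    ∃ eΩ' : Fin 3 → ℝ,
      (∀ i, HasDerivAt (fun τ => (Ω τ - ((R τ)ᵀ * Rd τ).mulVec (Ωd τ)) i) (eΩ' i) t) ∧
      J.mulVec eΩ' =
        cross (J.mulVec (Ω t - ((R t)ᵀ * Rd t).mulVec (Ωd t)) + d)
            (Ω t - ((R t)ᵀ * Rd t).mulVec (Ωd t))
          - kR • eR (R t) (Rd t) - kΩ • (Ω t - ((R t)ᵀ * Rd t).mulVec (Ωd t))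
          - kI • eI + ΔR := by
  classical
  set u : Fin 3 → ℝ := fun i =>
    ∑ k, ∑ j, (((R t * hat (Ω t)) j i * Rd t j k + R t j i * (Rd t * hat (Ωd t)) j k) * Ωd t k
      + R t j i * Rd t j k * Ωd' t k) with hu
  refine ⟨Ω' t - u, ?_, ?_⟩
  · intro i
    have h1 : (fun τ => (Ω τ - ((R τ)ᵀ * Rd τ).mulVec (Ωd τ)) i)
        = fun τ => Ω τ i - ∑ k, ∑ j, R τ j i * Rd τ j k * Ωd τ k := by
      funext τ
      simp [Matrix.mulVec, Matrix.mul_apply, dotProduct, Matrix.transpose_apply,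
        Finset.sum_mul]
    rw [h1]
    have h2 : HasDerivAt (fun τ => ∑ k, ∑ j, R τ j i * Rd τ j k * Ωd τ k) (u i) t := by
      rw [hu]
      exact HasDerivAt.fun_sum fun k _ => HasDerivAt.fun_sum fun j _ =>
        ((hR t j i).fun_mul (hRd t j k)).fun_mul (hΩd t k)
    simpa using (hΩ t i).fun_sub h2
  · have hu2 : u = -(cross (Ω t) (((R t)ᵀ * Rd t).mulVec (Ωd t)))
        + ((R t)ᵀ * Rd t).mulVec (Ωd' t) := by
      funext i
      fin_cases i <;>
      · simp [hu, Matrix.mulVec, Matrix.mul_apply, dotProduct, cross, hat,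
          Fin.sum_univ_three, Matrix.transpose_apply]
        ring
    have hsub : J.mulVec (Ω' t - u) = J.mulVec (Ω' t) - J.mulVec u :=
      Matrix.mulVec_sub J _ _
    rw [hsub, hu2, hdyn, hM, hd, key_cross J hJsymm (Ω t) (((R t)ᵀ * Rd t).mulVec (Ωd t)),
      Matrix.mulVec_add, Matrix.mulVec_neg]
    abel
end
end

section
/- Define the scalar saturation function sat_σ(y) = σ if y > σ, y if −σ ≤ y ≤ σ, −σ if y < −σ, for σ > 0, applied componentwise to vectors in ℝ³. If k_iσ > δ_x ≥ ‖Δ_x‖_∞ for a fixed vector Δ_x ∈ ℝ³, then the function V(e_i) = ∫ from Δ_x/k_i to e_i of (k_i·sat_σ(μ) − Δ_x)·dμ (taken componentwise along straight segments) is nonnegative, and V(e_i) = 0 iff e_i = Δ_x/k_i. -/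
open Matrix
noncomputable section

/-- Scalar saturation function: clamp to `[-σ, σ]`. -/
def sat (σ y : ℝ) : ℝ := max (-σ) (min σ y)

theorem integral_term_posdef (ki σ δx : ℝ) (hki : 0 < ki) (hσ : 0 < σ) (hδ : 0 < δx)
    (Δx : Fin 3 → ℝ) (hΔ : ∀ j, |Δx j| ≤ δx) (hsat : δx < ki * σ)
    (V : (Fin 3 → ℝ) → ℝ)
    (hV : V = fun e => ∑ j, ∫ s in (Δx j / ki)..(e j), (ki * sat σ s - Δx j)) :
    (∀ e, 0 ≤ V e) ∧ (∀ e, V e = 0 ↔ e = fun j => Δx j / ki) := by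
  set a : Fin 3 → ℝ := fun j => Δx j / ki with ha
  set f : Fin 3 → ℝ → ℝ := fun j s => ki * sat σ s - Δx j with hf
  have habs : ∀ j, |a j| < σ := by
    intro j
    rw [ha]
    simp only [abs_div, abs_of_pos hki, div_lt_iff₀ hki]
    calc |Δx j| ≤ δx := hΔ j
      _ < ki * σ := hsat
      _ = σ * ki := mul_comm _ _
  have hcont : ∀ j, Continuous (f j) := by
    intro j
    simp only [hf]
    unfold sat
    fun_prop
  have hfpos : ∀ j s, a j < s → 0 < f j s := by
    intro j s hs
    have h1 := (abs_lt.mp (habs j)).1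
    have h2 := (abs_lt.mp (habs j)).2
    simp only [hf, sat]
    rcases le_or_gt s σ with h | h
    · rw [min_eq_right h, max_eq_right (by linarith)]
      have : Δx j / ki < s := hs
      nlinarith [(div_lt_iff₀ hki).mp this]
    · rw [min_eq_left h.le, max_eq_right (by linarith)]
      have := (hΔ j).trans hsat.le
      have := abs_le.mp ((hΔ j).trans hsat.le)
      linarith [hsat, (abs_le.mp (hΔ j)).2]
  have hfneg : ∀ j s, s < a j → f j s < 0 := by
    intro j s hs
    have h1 := (abs_lt.mp (habs j)).1
    have h2 := (abs_lt.mp (habs j)).2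
    simp only [hf, sat]
    rcases le_or_gt (-σ) s with h | h
    · rw [min_eq_right (by linarith), max_eq_right h]
      have : s < Δx j / ki := hs
      nlinarith [(lt_div_iff₀ hki).mp this]
    · rw [max_eq_left ((min_le_right σ s).trans (by linarith))]
      nlinarith [(abs_le.mp (hΔ j)).1, hsat]
  have hpos : ∀ j e, e ≠ a j → 0 < ∫ s in (a j)..e, f j s := by
    intro j e he
    rcases lt_or_gt_of_ne he with h | h
    · have hint : IntervalIntegrable (fun s => -(f j s)) MeasureTheory.volume e (a j) :=
        ((hcont j).neg.intervalIntegrable _ _)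
      have := intervalIntegral.intervalIntegral_pos_of_pos_on hint
        (fun x hx => by simpa using (hfneg j x hx.2)) h
      rw [intervalIntegral.integral_neg] at this
      rw [intervalIntegral.integral_symm]
      linarith
    · exact intervalIntegral.intervalIntegral_pos_of_pos_on
        ((hcont j).intervalIntegrable _ _) (fun x hx => hfpos j x hx.1) h
  have hnn : ∀ j e, 0 ≤ ∫ s in (a j)..e, f j s := by
    intro j e
    rcases eq_or_ne e (a j) with h | h
    · rw [h, intervalIntegral.integral_same]
    · exact (hpos j e h).le
  subst hV
  constructor
  · intro e
    exact Finset.sum_nonneg fun j _ => hnn j (e j)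
  · intro e
    constructor
    · intro h0
      funext j
      by_contra hne
      have hall := (Finset.sum_eq_zero_iff_of_nonneg
        (fun j _ => hnn j (e j))).mp h0 j (Finset.mem_univ j)
      exact absurd hall (ne_of_gt (hpos j (e j) hne))
    · intro h
      subst h
      simp [ha]
end
end

section
/- Let m, k_x, k_v, c₁ > 0 and 0 ≤ α < 1. If c₁ < min{ 4k_xk_v(1−α)²/(k_v²(1+α)² + 4mk_x(1−α)), √(k_x/m) }, then both matrices M₁₁ = (1/2)[[k_x, −mc₁],[−mc₁, m]] and W₁ = [[c₁k_x(1−α), −(c₁k_v/2)(1+α)],[−(c₁k_v/2)(1+α), k_v(1−α) − mc₁]] are positive definite. -/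
open Matrix
noncomputable section

lemma posdef2_aux (a b c : ℝ) (ha : 0 < a) (h : b^2 < a*c) : (!![a,b;b,c]).PosDef := by
  have hc : 0 < c := by nlinarith [sq_nonneg b]
  rw [Matrix.posDef_iff_dotProduct_mulVec]
  constructor
  · simp [Matrix.IsHermitian, Matrix.conjTranspose, Matrix.transpose, Matrix.vecHead,
      Matrix.vecTail, ← Matrix.ext_iff, Fin.forall_fin_two]
  · intro x hx
    have hx' : x 0 ≠ 0 ∨ x 1 ≠ 0 := by
      by_contra hcon
      push_neg at hcon
      apply hx
      ext i; fin_cases i <;> simp [hcon.1, hcon.2]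
    simp [dotProduct, Matrix.mulVec, Fin.sum_univ_two]
    rcases hx' with h0 | h0
    · nlinarith [mul_self_pos.mpr h0, sq_nonneg (b * x 0 + c * x 1), sq_nonneg (x 1)]
    · nlinarith [mul_self_pos.mpr h0, sq_nonneg (a * x 0 + b * x 1), sq_nonneg (x 0)]

theorem translational_gain_matrices_posdef
    (m kx kv c1 α : ℝ) (hm : 0 < m) (hkx : 0 < kx) (hkv : 0 < kv)
    (hc1pos : 0 < c1) (hα0 : 0 ≤ α) (hα1 : α < 1)
    (hc1 : c1 < min (4 * kx * kv * (1 - α) ^ 2 / (kv ^ 2 * (1 + α) ^ 2 + 4 * m * kx * (1 - α)))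
      (Real.sqrt (kx / m))) :
    ((1/2 : ℝ) • !![kx, -m * c1; -m * c1, m]).PosDef ∧
    (!![c1 * kx * (1 - α), -(c1 * kv / 2) * (1 + α);
        -(c1 * kv / 2) * (1 + α), kv * (1 - α) - m * c1]).PosDef := by
  have hsq : c1 ^ 2 < kx / m := by
    have := lt_of_lt_of_le hc1 (min_le_right _ _)
    exact (Real.lt_sqrt hc1pos.le).mp this
  have h1 : m * c1 ^ 2 < kx := by
    have := (lt_div_iff₀ hm).mp hsq
    linarith
  have hden : 0 < kv ^ 2 * (1 + α) ^ 2 + 4 * m * kx * (1 - α) := by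
    nlinarith [sq_nonneg (kv * (1 + α)), mul_pos hm hkx]
  have h2 : c1 * (kv ^ 2 * (1 + α) ^ 2 + 4 * m * kx * (1 - α)) < 4 * kx * kv * (1 - α) ^ 2 := by
    have := lt_of_lt_of_le hc1 (min_le_left _ _)
    exact (lt_div_iff₀ hden).mp this
  constructor
  · have heq : (1/2 : ℝ) • !![kx, -m * c1; -m * c1, m] =
        !![kx / 2, -(m * c1) / 2; -(m * c1) / 2, m / 2] := by
      ext i j; fin_cases i <;> fin_cases j <;> simp <;> ring
    rw [heq]
    apply posdef2_aux _ _ _ (by linarith)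
    nlinarith
  · apply posdef2_aux _ _ _ (mul_pos (mul_pos hc1pos hkx) (by linarith))
    nlinarith [mul_pos hc1pos hc1pos, mul_pos hkx hc1pos]
end
end
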